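/- Let G be a P₆-free graph and S a minimal separator in G with two components D₁, D₂ of G − S full to S. Then there exist sets A₁ ⊆ D₁ and A₂ ⊆ D₂ with |A₁| ≤ 3 and |A₂| ≤ 3 such that S ⊆ N[A₁ ∪ A₂]. -/

import Mathlib

open SimpleGraph

variable {V : Type*}

/-- `D` is (the vertex set of) a connected component of `G - S`. -/
def IsCompOf (G : SimpleGraph V) (S D : Set V) : Prop :=
  D.Nonempty ∧ Disjoint D S ∧ (G.induce D).Connected ∧
    ∀ v ∈ D, ∀ w : V, G.Adj v w → w ∉ S → w ∈ D

/-- The open neighborhood `N(D)` of a vertex set `D`. -/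
def nbhd (G : SimpleGraph V) (D : Set V) : Set V :=
  {v | v ∉ D ∧ ∃ d ∈ D, G.Adj v d}

/-- The closed neighborhood `N[D]` of a vertex set `D`. -/
def closedNbhd (G : SimpleGraph V) (D : Set V) : Set V :=
  D ∪ nbhd G D

/-- `D` is full to `S`: every vertex of `S` has a neighbor in `D`. -/
def FullTo (G : SimpleGraph V) (S D : Set V) : Prop :=
  ∀ s ∈ S, ∃ d ∈ D, G.Adj s d

/-- `S` is a minimal separator: `G - S` has at least two components full to `S`. -/
def IsMinSep (G : SimpleGraph V) (S : Set V) : Prop :=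
  ∃ D₁ D₂ : Set V, IsCompOf G S D₁ ∧ IsCompOf G S D₂ ∧ D₁ ≠ D₂ ∧
    FullTo G S D₁ ∧ FullTo G S D₂

/-- A graph is `P₆`-free if it contains no induced path on 6 vertices. -/
def P6Free (G : SimpleGraph V) : Prop :=
  IsEmpty (pathGraph 6 ↪g G)


/- ------------------------------------------------------------------
   Auxiliary development
------------------------------------------------------------------ -/

section Aux

set_option maxHeartbeats 1000000 in
lemma no_p6 {G : SimpleGraph V} (hP6 : P6Free G) {a b c d e f : V}
    (e1 : G.Adj a b) (e2 : G.Adj b c) (e3 : G.Adj c d) (e4 : G.Adj d e) (e5 : G.Adj e f)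
    (n1 : ¬G.Adj a c) (n2 : ¬G.Adj a d) (n3 : ¬G.Adj a e) (n4 : ¬G.Adj a f)
    (n5 : ¬G.Adj b d) (n6 : ¬G.Adj b e) (n7 : ¬G.Adj b f)
    (n8 : ¬G.Adj c e) (n9 : ¬G.Adj c f) (n10 : ¬G.Adj d f) : False := by
  have hab : a ≠ b := e1.ne
  have hbc : b ≠ c := e2.ne
  have hcd : c ≠ d := e3.ne
  have hde : d ≠ e := e4.ne
  have hef : e ≠ f := e5.ne
  have hac : a ≠ c := fun h => n2 (h ▸ e3)
  have had : a ≠ d := fun h => n3 (h ▸ e4)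
  have hae : a ≠ e := fun h => n4 (h ▸ e5)
  have haf : a ≠ f := fun h => n3 (by rw [h]; exact e5.symm)
  have hbd : b ≠ d := fun h => n6 (h ▸ e4)
  have hbe : b ≠ e := fun h => n7 (h ▸ e5)
  have hbf : b ≠ f := fun h => n6 (by rw [h]; exact e5.symm)
  have hce : c ≠ e := fun h => n9 (h ▸ e5)
  have hcf : c ≠ f := fun h => n8 (by rw [h]; exact e5.symm)
  have hdf : d ≠ f := fun h => n9 (h ▸ e3)
  refine hP6.false ⟨⟨![a,b,c,d,e,f], ?_⟩, ?_⟩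
  · intro i j hij
    fin_cases i <;> fin_cases j <;>
      first
        | rfl
        | exact absurd hij hab | exact absurd hij hab.symm
        | exact absurd hij hac | exact absurd hij hac.symm
        | exact absurd hij had | exact absurd hij had.symm
        | exact absurd hij hae | exact absurd hij hae.symm
        | exact absurd hij haf | exact absurd hij haf.symm
        | exact absurd hij hbc | exact absurd hij hbc.symm
        | exact absurd hij hbd | exact absurd hij hbd.symm
        | exact absurd hij hbe | exact absurd hij hbe.symm
        | exact absurd hij hbf | exact absurd hij hbf.symm
        | exact absurd hij hcd | exact absurd hij hcd.symm
        | exact absurd hij hce | exact absurd hij hce.symm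
        | exact absurd hij hcf | exact absurd hij hcf.symm
        | exact absurd hij hde | exact absurd hij hde.symm
        | exact absurd hij hdf | exact absurd hij hdf.symm
        | exact absurd hij hef | exact absurd hij hef.symm
  · intro i j
    rw [pathGraph_adj]
    fin_cases i <;> fin_cases j <;>
      first
        | exact iff_of_true e1 (by decide) | exact iff_of_true e1.symm (by decide)
        | exact iff_of_true e2 (by decide) | exact iff_of_true e2.symm (by decide)
        | exact iff_of_true e3 (by decide) | exact iff_of_true e3.symm (by decide)
        | exact iff_of_true e4 (by decide) | exact iff_of_true e4.symm (by decide)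
        | exact iff_of_true e5 (by decide) | exact iff_of_true e5.symm (by decide)
        | exact iff_of_false (G.loopless.irrefl _) (by decide)
        | exact iff_of_false n1 (by decide) | exact iff_of_false (fun h => n1 h.symm) (by decide)
        | exact iff_of_false n2 (by decide) | exact iff_of_false (fun h => n2 h.symm) (by decide)
        | exact iff_of_false n3 (by decide) | exact iff_of_false (fun h => n3 h.symm) (by decide)
        | exact iff_of_false n4 (by decide) | exact iff_of_false (fun h => n4 h.symm) (by decide)
        | exact iff_of_false n5 (by decide) | exact iff_of_false (fun h => n5 h.symm) (by decide)
        | exact iff_of_false n6 (by decide) | exact iff_of_false (fun h => n6 h.symm) (by decide)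
        | exact iff_of_false n7 (by decide) | exact iff_of_false (fun h => n7 h.symm) (by decide)
        | exact iff_of_false n8 (by decide) | exact iff_of_false (fun h => n8 h.symm) (by decide)
        | exact iff_of_false n9 (by decide) | exact iff_of_false (fun h => n9 h.symm) (by decide)
        | exact iff_of_false n10 (by decide) | exact iff_of_false (fun h => n10 h.symm) (by decide)


/-- Chordless (induced) path as a list of vertices. -/
def IP (G : SimpleGraph V) : List V → Prop
  | [] => True
  | [_] => True
  | a :: b :: l => G.Adj a b ∧ (∀ x ∈ l, ¬G.Adj a x ∧ a ≠ x) ∧ IP G (b :: l)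

variable {G : SimpleGraph V}

lemma IP_tail {a : V} {l : List V} (h : IP G (a :: l)) : IP G l := by
  cases l with
  | nil => trivial
  | cons b t => exact h.2.2

lemma IP_nodup : ∀ {l : List V}, IP G l → l.Nodup := by
  intro l
  induction l with
  | nil => simp
  | cons a t ih =>
    intro h
    cases t with
    | nil => simp
    | cons b r =>
      obtain ⟨hab, H, h'⟩ := h
      refine List.nodup_cons.mpr ⟨?_, ih h'⟩
      simp only [List.mem_cons]
      rintro (rfl | har)
      · exact hab.ne rfl
      · exact (H _ har).2 rfl

lemma IP_extend {u : V} : ∀ {l : List V}, IP G l → (∃ z ∈ l, G.Adj u z ∨ u = z) →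
    ∃ m, IP G (u :: m) ∧ (u :: m).getLast? = l.getLast? ∧ ∀ x ∈ m, x ∈ l := by
  intro l
  induction l with
  | nil => rintro _ ⟨z, hz, -⟩; simp at hz
  | cons a t ih =>
    intro h hz
    by_cases hzt : ∃ z ∈ t, G.Adj u z ∨ u = z
    · obtain ⟨b, r, rfl⟩ : ∃ b r, t = b :: r := by
        rcases hzt with ⟨z, hztm, -⟩
        cases t with
        | nil => simp at hztm
        | cons b r => exact ⟨b, r, rfl⟩
      obtain ⟨m, hm1, hm2, hm3⟩ := ih (IP_tail h) hzt
      exact ⟨m, hm1, by rw [hm2, List.getLast?_cons_cons],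
        fun x hx => List.mem_cons_of_mem a (hm3 x hx)⟩
    · push_neg at hzt
      obtain ⟨z, hzm, hz2⟩ := hz
      have hza : z = a := by
        rcases List.mem_cons.mp hzm with rfl | hzt'
        · rfl
        · rcases hz2 with h' | rfl
          · exact absurd h' (hzt _ hzt').1
          · exact absurd rfl (hzt _ hzt').2
      subst hza
      rcases hz2 with hadj | rfl
      · refine ⟨z :: t, ⟨hadj, fun x hx => ⟨(hzt x hx).1, (hzt x hx).2⟩, h⟩, ?_, fun x hx => hx⟩
        cases t <;> simp [List.getLast?_cons_cons]
      · exact ⟨t, h, rfl, fun x hx => List.mem_cons_of_mem _ hx⟩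

lemma exists_IP {W : Set V} {x y : V} (p : G.Walk x y) (hp : ∀ v ∈ p.support, v ∈ W) :
    ∃ l, IP G l ∧ l.head? = some x ∧ l.getLast? = some y ∧ ∀ v ∈ l, v ∈ W := by
  induction p with
  | nil =>
    refine ⟨[_], trivial, rfl, rfl, ?_⟩
    intro v hv
    simp only [List.mem_singleton] at hv
    subst hv
    exact hp _ (by simp)
  | @cons x c y hadj p ih =>
    obtain ⟨l, hl, hhead, hlast, hmem⟩ := ih (fun v hv => hp v (by simp [Walk.support_cons, hv]))
    have hcl : c ∈ l := by
      cases l with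
      | nil => simp at hhead
      | cons a t =>
        simp only [List.head?_cons, Option.some_inj] at hhead
        subst hhead; exact List.mem_cons_self
    obtain ⟨m, hm1, hm2, hm3⟩ := IP_extend hl ⟨c, hcl, Or.inl hadj⟩
    refine ⟨x :: m, hm1, rfl, by rw [hm2, hlast], ?_⟩
    intro v hv
    rcases List.mem_cons.mp hv with rfl | hvm
    · exact hp _ (by simp)
    · exact hmem v (hm3 v hvm)

lemma walk_down {D : Set V} (hc : (G.induce D).Connected) {a b : V} (ha : a ∈ D) (hb : b ∈ D) :
    ∃ p : G.Walk a b, ∀ v ∈ p.support, v ∈ D := by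
  have aux : ∀ (s t : D) (w : (G.induce D).Walk s t),
      ∃ p : G.Walk s.1 t.1, ∀ v ∈ p.support, v ∈ D := by
    intro s t w
    induction w with
    | nil =>
      refine ⟨Walk.nil, ?_⟩
      intro v hv
      simp only [Walk.support_nil, List.mem_singleton] at hv
      subst hv
      exact Subtype.coe_prop _
    | @cons s c t h q ih =>
      obtain ⟨p, hpmem⟩ := ih
      refine ⟨Walk.cons (by exact h) p, ?_⟩
      intro v hv
      rcases List.mem_cons.mp (show v ∈ s.1 :: p.support from hv) with rfl | hvm
      · exact s.2
      · exact hpmem v hvm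
  obtain ⟨w⟩ := hc.preconnected ⟨a, ha⟩ ⟨b, hb⟩
  exact aux ⟨a, ha⟩ ⟨b, hb⟩ w

lemma IP_append {u : V} : ∀ {xs : List V}, ∀ {ys : List V}, IP G (xs ++ [u]) → IP G (u :: ys) →
    (∀ a ∈ xs, ∀ b ∈ ys, ¬G.Adj a b ∧ a ≠ b) → IP G (xs ++ u :: ys) := by
  intro xs
  induction xs with
  | nil => intro ys _ h2 _; exact h2
  | cons a xs' ih =>
    intro ys h1 h2 hcr
    cases xs' with
    | nil =>
      obtain ⟨hau, -, -⟩ := h1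
      exact ⟨hau, fun x hx => hcr a (by simp) x hx, h2⟩
    | cons b xs'' =>
      obtain ⟨hab, H, h1'⟩ := h1
      refine ⟨hab, ?_, ih h1' h2 (fun x hx => hcr x (List.mem_cons_of_mem _ hx))⟩
      intro x hx
      rcases List.mem_append.mp hx with hx' | hx'
      · exact H x (List.mem_append.mpr (Or.inl hx'))
      · rcases List.mem_cons.mp hx' with rfl | hx''
        · exact H x (by simp)
        · exact hcr a (by simp) x hx''


lemma IP_no_six (hP6 : P6Free G) {a b c d e f : V} {rest : List V}
    (h : IP G (a :: b :: c :: d :: e :: f :: rest)) : False := by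
  obtain ⟨e1, H1, h⟩ := h
  obtain ⟨e2, H2, h⟩ := h
  obtain ⟨e3, H3, h⟩ := h
  obtain ⟨e4, H4, h⟩ := h
  obtain ⟨e5, H5, -⟩ := h
  exact no_p6 hP6 e1 e2 e3 e4 e5
    (H1 c (by simp)).1 (H1 d (by simp)).1 (H1 e (by simp)).1 (H1 f (by simp)).1
    (H2 d (by simp)).1 (H2 e (by simp)).1 (H2 f (by simp)).1
    (H3 e (by simp)).1 (H3 f (by simp)).1
    (H4 f (by simp)).1

lemma IP_length_le (hP6 : P6Free G) {l : List V} (h : IP G l) : l.length ≤ 5 := by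
  by_contra h6
  push_neg at h6
  rcases l with _ | ⟨a, _ | ⟨b, _ | ⟨c, _ | ⟨d, _ | ⟨e, _ | ⟨f, rest⟩⟩⟩⟩⟩⟩ <;>
    simp only [List.length_cons, List.length_nil] at h6 <;> try omega
  exact IP_no_six hP6 h


/-- One half of the path construction: a chordless list from `x₀` through `D₁` to `u`,
of length exactly 3 forced later. -/
lemma superkey (hP6 : P6Free G) {D₁ D₂ : Set V}
    (hcross : ∀ ⦃x⦄, x ∈ D₁ → ∀ ⦃y⦄, y ∈ D₂ → ¬G.Adj x y)
    (hdisj : Disjoint D₁ D₂)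
    (hc₁ : (G.induce D₁).Connected) (hc₂ : (G.induce D₂).Connected)
    {x₀ y₀ u : V} (hx₀ : x₀ ∈ D₁) (hy₀ : y₀ ∈ D₂) (hu₁ : u ∉ D₁) (hu₂ : u ∉ D₂)
    (hux : ¬G.Adj u x₀) (huy : ¬G.Adj u y₀)
    {d₁ d₂ : V} (hd₁ : d₁ ∈ D₁) (hud₁ : G.Adj u d₁) (hd₂ : d₂ ∈ D₂) (hud₂ : G.Adj u d₂) :
    (∃ p ∈ D₁, G.Adj x₀ p ∧ G.Adj u p) ∧ (∃ q ∈ D₂, G.Adj y₀ q ∧ G.Adj u q) := by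
  -- walk from x₀ to u inside D₁ ∪ {u}
  obtain ⟨w₁, hw₁⟩ := walk_down hc₁ hx₀ hd₁
  obtain ⟨l₁, hl₁, hh₁, hg₁, hm₁⟩ := exists_IP (G := G) (W := insert u D₁)
    (w₁.concat hud₁.symm) (by
      intro v hv
      rw [Walk.support_concat] at hv
      rcases List.mem_append.mp hv with hv' | hv'
      on_goal 2 => rw [List.mem_singleton] at hv'; subst hv' 
      · exact Set.mem_insert_of_mem _ (hw₁ v hv')
      · exact Set.mem_insert _ _)
  -- walk from u to y₀ inside D₂ ∪ {u}
  obtain ⟨w₂, hw₂⟩ := walk_down hc₂ hd₂ hy₀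
  obtain ⟨l₂, hl₂, hh₂, hg₂, hm₂⟩ := exists_IP (G := G) (W := insert u D₂)
    (Walk.cons hud₂ w₂) (by
      intro v hv
      rw [Walk.support_cons] at hv
      rcases List.mem_cons.mp hv with rfl | hv'
      · exact Set.mem_insert _ _
      · exact Set.mem_insert_of_mem _ (hw₂ v hv'))
  -- decompose l₁ = xs ++ [u]
  have hxs : l₁.dropLast ++ [u] = l₁ := List.dropLast_append_getLast? u hg₁
  set xs := l₁.dropLast with hxsdef
  -- decompose l₂ = u :: t₂
  obtain ⟨t₂, hl₂eq⟩ : ∃ t₂, l₂ = u :: t₂ := by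
    cases l₂ with
    | nil => simp at hh₂
    | cons z t =>
      simp only [List.head?_cons, Option.some_inj] at hh₂
      exact ⟨t, by rw [hh₂]⟩
  subst hl₂eq
  -- elements of xs are in D₁, elements of t₂ are in D₂
  have hnd₁ : (xs ++ [u]).Nodup := by rw [hxs]; exact IP_nodup hl₁
  have hxsD : ∀ a ∈ xs, a ∈ D₁ := by
    intro a ha
    have hau : a ≠ u := by
      have := (List.nodup_append'.mp hnd₁).2.2
      intro h; exact this ha (by simp [h])
    have : a ∈ insert u D₁ := hm₁ a (by rw [← hxs]; exact List.mem_append.mpr (Or.inl ha))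
    rcases Set.mem_insert_iff.mp this with h | h
    · exact absurd h hau
    · exact h
  have hnd₂ : (u :: t₂).Nodup := IP_nodup hl₂
  have ht₂D : ∀ b ∈ t₂, b ∈ D₂ := by
    intro b hb
    have hbu : b ≠ u := by
      intro h; subst h; exact (List.nodup_cons.mp hnd₂).1 hb
    have : b ∈ insert u D₂ := hm₂ b (List.mem_cons_of_mem _ hb)
    rcases Set.mem_insert_iff.mp this with h | h
    · exact absurd h hbu
    · exact h
  -- concatenate
  have hIP : IP G (xs ++ u :: t₂) := by
    refine IP_append (by rw [hxs]; exact hl₁) hl₂ ?_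
    intro a ha b hb
    exact ⟨hcross (hxsD a ha) (ht₂D b hb),
      fun h => (Set.disjoint_left.mp hdisj (hxsD a ha)) (h ▸ ht₂D b hb)⟩
  have hlen : xs.length + (t₂.length + 1) ≤ 5 := by
    have := IP_length_le hP6 hIP
    simpa using this
  -- l₁ has length ≥ 3
  have hxs2 : 2 ≤ xs.length := by
    have hlen1 : l₁.length = xs.length + 1 := by rw [← hxs]; simp
    rcases l₁ with _ | ⟨a, _ | ⟨b, _ | ⟨c, t⟩⟩⟩
    · simp at hh₁
    · -- l₁ = [a]: a = x₀ and getLast? = some a = some u: x₀ = u ∈ D₁, contra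
      simp only [List.head?_cons, Option.some_inj] at hh₁
      simp only [List.getLast?_singleton, Option.some_inj] at hg₁
      exact absurd (hg₁ ▸ hh₁ ▸ hx₀) hu₁
    · -- l₁ = [a, b] : a = x₀, b = u, IP gives adjacency x₀ u
      simp only [List.head?_cons, Option.some_inj] at hh₁
      have hgb : b = u := by simpa using hg₁
      obtain ⟨hadj, -, -⟩ := hl₁
      exact absurd (hh₁ ▸ hgb ▸ hadj).symm hux
    · simp only [List.length_cons] at hlen1; omega
  have ht₂2 : 2 ≤ t₂.length := by
    rcases t₂ with _ | ⟨a, _ | ⟨b, t⟩⟩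
    · -- l₂ = [u]: getLast? = some u = some y₀
      simp only [List.getLast?_singleton, Option.some_inj] at hg₂
      exact absurd (hg₂ ▸ hy₀) hu₂
    · -- l₂ = [u, a]: a = y₀; adjacency u y₀
      have hga : a = y₀ := by simpa using hg₂
      obtain ⟨hadj, -, -⟩ := hl₂
      exact absurd (hga ▸ hadj) huy
    · simp
  have hxslen : xs.length = 2 := by omega
  have ht₂len : t₂.length = 2 := by omega
  obtain ⟨α, β, hxs2eq⟩ := List.length_eq_two.mp hxslen
  obtain ⟨γ, δ, ht₂eq⟩ := List.length_eq_two.mp ht₂len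
  -- identify α = x₀
  have hl₁eq : l₁ = α :: β :: [u] := by rw [← hxs, hxs2eq]; rfl
  have hax : α = x₀ := by rw [hl₁eq] at hh₁; simpa using hh₁
  have hl₁' : IP G (x₀ :: β :: [u]) := by rw [hax] at hl₁eq; rw [← hl₁eq]; exact hl₁
  obtain ⟨h1, -, h2, -, -⟩ := hl₁'
  -- β ∈ D₁
  have hβ : β ∈ D₁ := hxsD β (by rw [hxs2eq]; simp)
  -- identify δ = y₀
  have hl₂eq : (u :: t₂) = u :: γ :: [δ] := by rw [ht₂eq]
  have hδ : δ = y₀ := by rw [ht₂eq] at hg₂; simpa using hg₂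
  have hl₂' : IP G (u :: γ :: [y₀]) := by rw [← hδ, ← ht₂eq]; exact hl₂
  obtain ⟨h3, -, h4, -, -⟩ := hl₂'
  have hγ : γ ∈ D₂ := ht₂D γ (by rw [ht₂eq]; simp)
  exact ⟨⟨β, hβ, h1, h2.symm⟩, ⟨γ, hγ, h4.symm, h3⟩⟩


/-- Two distinct components are disjoint. -/
lemma comp_subset {S D₁ D₂ : Set V} (hD₁ : IsCompOf G S D₁) (hD₂ : IsCompOf G S D₂)
    {v : V} (hv₁ : v ∈ D₁) (hv₂ : v ∈ D₂) : D₁ ⊆ D₂ := by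
  intro w hw
  have aux : ∀ (s t : D₁), (G.induce D₁).Walk s t → s.1 ∈ D₂ → t.1 ∈ D₂ := by
    intro s t p
    induction p with
    | nil => exact id
    | @cons s c t h q ih =>
      intro hs
      have hadj : G.Adj s.1 c.1 := h
      have hcS : c.1 ∉ S := Set.disjoint_left.mp hD₁.2.1 c.2
      exact ih (hD₂.2.2.2 s.1 hs c.1 hadj hcS)
  obtain ⟨p⟩ := hD₁.2.2.1.preconnected ⟨v, hv₁⟩ ⟨w, hw⟩
  exact aux _ _ p hv₂

lemma comps_disjoint {S D₁ D₂ : Set V} (hD₁ : IsCompOf G S D₁) (hD₂ : IsCompOf G S D₂)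
    (hne : D₁ ≠ D₂) : Disjoint D₁ D₂ := by
  rw [Set.disjoint_left]
  intro v hv₁ hv₂
  exact hne (Set.Subset.antisymm (comp_subset hD₁ hD₂ hv₁ hv₂) (comp_subset hD₂ hD₁ hv₂ hv₁))

lemma no_cross {S D₁ D₂ : Set V} (hD₁ : IsCompOf G S D₁) (hD₂ : IsCompOf G S D₂)
    (hne : D₁ ≠ D₂) : ∀ ⦃x⦄, x ∈ D₁ → ∀ ⦃y⦄, y ∈ D₂ → ¬G.Adj x y := by
  intro x hx y hy hAdj
  have hyS : y ∉ S := Set.disjoint_left.mp hD₂.2.1 hy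
  have hyD₁ : y ∈ D₁ := hD₁.2.2.2 x hx y hAdj hyS
  exact Set.disjoint_left.mp (comps_disjoint hD₁ hD₂ hne) hyD₁ hy

/-- The key exchange claim. -/
lemma claimA (hP6 : P6Free G) {D₁ D₂ : Set V}
    (hcross : ∀ ⦃x⦄, x ∈ D₁ → ∀ ⦃y⦄, y ∈ D₂ → ¬G.Adj x y)
    {x₀ y₀ u v pb qb q' p' : V}
    (hx₀ : x₀ ∈ D₁) (hy₀ : y₀ ∈ D₂) (hpb : pb ∈ D₁) (hqb : qb ∈ D₂)
    (hq' : q' ∈ D₂) (hp' : p' ∈ D₁)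
    (hux : ¬G.Adj u x₀) (huy : ¬G.Adj u y₀) (hvx : ¬G.Adj v x₀) (hvy : ¬G.Adj v y₀)
    (h1 : G.Adj x₀ pb) (h2 : G.Adj u pb) (h3 : ¬G.Adj pb v)
    (h4 : G.Adj y₀ qb) (h5 : G.Adj u qb) (h6 : ¬G.Adj qb v)
    (h7 : G.Adj y₀ q') (h8 : G.Adj v q')
    (h9 : G.Adj x₀ p') (h10 : G.Adj v p') : G.Adj u p' := by
  by_contra hup'
  by_cases hA : G.Adj u v
  · -- P6: y₀, qb, u, v, p', x₀
    exact no_p6 hP6 h4 h5.symm hA h10 h9.symm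
      (fun h => huy h.symm) (fun h => hvy h.symm) (hcross hp' hy₀ ∘ Adj.symm)
      (fun h => hcross hx₀ hy₀ h.symm) h6 (hcross hp' hqb ∘ Adj.symm)
      (fun h => hcross hx₀ hqb h.symm) hup' hux hvx
  · have hpp : G.Adj pb p' := by
      by_contra hpp
      -- P6: pb, x₀, p', v, q', y₀
      exact no_p6 hP6 h1.symm h9 h10.symm h8 h7.symm
        hpp h3 (hcross hpb hq') (hcross hpb hy₀)
        (fun h => hvx h.symm) (hcross hx₀ hq') (hcross hx₀ hy₀)
        (hcross hp' hq') (hcross hp' hy₀) hvy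
    -- P6: v, p', pb, u, qb, y₀
    exact no_p6 hP6 h10 hpp.symm h2.symm h5 h4.symm
      (fun h => h3 h.symm) (fun h => hA h.symm) (fun h => h6 h.symm) hvy
      (fun h => hup' h.symm) (hcross hp' hqb) (hcross hp' hy₀)
      (hcross hpb hqb) (hcross hpb hy₀) huy


end Aux

/-- Separator Covering Lemma (simplified): in a `P₆`-free graph, a minimal separator `S`
with full components `D₁, D₂` is covered by `N[A₁ ∪ A₂]` for some `Aᵢ ⊆ Dᵢ` of size at
most 3. -/
theorem statement_8 [Fintype V] (G : SimpleGraph V) (hP6 : P6Free G)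
    (S D₁ D₂ : Set V) (hD₁ : IsCompOf G S D₁) (hD₂ : IsCompOf G S D₂) (hne : D₁ ≠ D₂)
    (hf₁ : FullTo G S D₁) (hf₂ : FullTo G S D₂) :
    ∃ A₁ A₂ : Set V, A₁ ⊆ D₁ ∧ A₂ ⊆ D₂ ∧ A₁.ncard ≤ 3 ∧ A₂.ncard ≤ 3 ∧
      S ⊆ closedNbhd G (A₁ ∪ A₂) := by
  obtain ⟨x₀, hx₀⟩ := hD₁.1
  obtain ⟨y₀, hy₀⟩ := hD₂.1
  have hcross := no_cross hD₁ hD₂ hne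
  have hdisj := comps_disjoint hD₁ hD₂ hne
  have hSD₁ : ∀ s ∈ S, s ∉ D₁ := fun s hs h => Set.disjoint_left.mp hD₁.2.1 h hs
  have hSD₂ : ∀ s ∈ S, s ∉ D₂ := fun s hs h => Set.disjoint_left.mp hD₂.2.1 h hs
  set U : Set V := {s | s ∈ S ∧ ¬G.Adj s x₀ ∧ ¬G.Adj s y₀} with hUdef
  have hWit : ∀ u ∈ U, (∃ p ∈ D₁, G.Adj x₀ p ∧ G.Adj u p) ∧
      (∃ q ∈ D₂, G.Adj y₀ q ∧ G.Adj u q) := by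
    intro u hu
    obtain ⟨d₁, hd₁, hud₁⟩ := hf₁ u hu.1
    obtain ⟨d₂, hd₂, hud₂⟩ := hf₂ u hu.1
    exact superkey hP6 hcross hdisj hD₁.2.2.1 hD₂.2.2.1 hx₀ hy₀
      (hSD₁ u hu.1) (hSD₂ u hu.1) hu.2.1 hu.2.2 hd₁ hud₁ hd₂ hud₂
  by_cases hU : U.Nonempty
  · -- pick u⋆ in U with minimal number of D₁-witnesses
    set W1 : V → Set V := fun u => {p | p ∈ D₁ ∧ G.Adj x₀ p ∧ G.Adj u p} with hW1def
    have himg : ((fun u => (W1 u).ncard) '' U).Nonempty := hU.image _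
    obtain ⟨us, husU, hn⟩ := Nat.sInf_mem himg
    have hmin : ∀ v ∈ U, (W1 us).ncard ≤ (W1 v).ncard := by
      intro v hv
      have hn' : (W1 us).ncard = sInf ((fun u => (W1 u).ncard) '' U) := hn
      rw [hn']
      exact Nat.sInf_le ⟨v, hv, rfl⟩
    obtain ⟨⟨ps, hpsD, hpsx, hpsu⟩, ⟨qs, hqsD, hqsy, hqsu⟩⟩ := hWit us husU
    have hcov : ∀ v ∈ U, G.Adj v ps ∨ G.Adj v qs := by
      intro v hv
      by_contra hc
      push_neg at hc
      obtain ⟨hc1, hc2⟩ := hc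
      obtain ⟨-, ⟨qv, hqvD, hqvy, hqvv⟩⟩ := hWit v hv
      have hsub : W1 v ⊆ W1 us := by
        rintro p' ⟨hp'D, hp'x, hp'v⟩
        exact ⟨hp'D, hp'x, claimA hP6 hcross hx₀ hy₀ hpsD hqsD hqvD hp'D
          husU.2.1 husU.2.2 hv.2.1 hv.2.2
          hpsx hpsu (fun h => hc1 h.symm)
          hqsy hqsu (fun h => hc2 h.symm)
          hqvy hqvv hp'x hp'v⟩
      have hss : W1 v ⊂ W1 us :=
        ⟨hsub, fun hsup => hc1 (hsup ⟨hpsD, hpsx, hpsu⟩).2.2⟩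
      have hlt := Set.ncard_lt_ncard hss (Set.toFinite _)
      have hge := hmin v hv
      omega
    refine ⟨{x₀, ps}, {y₀, qs}, ?_, ?_, ?_, ?_, ?_⟩
    · intro z hz
      rcases hz with rfl | hz
      · exact hx₀
      · rw [Set.mem_singleton_iff] at hz; subst hz; exact hpsD
    · intro z hz
      rcases hz with rfl | hz
      · exact hy₀
      · rw [Set.mem_singleton_iff] at hz; subst hz; exact hqsD
    · calc ({x₀, ps} : Set V).ncard ≤ ({ps} : Set V).ncard + 1 := Set.ncard_insert_le _ _
        _ ≤ 3 := by rw [Set.ncard_singleton]; omega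
    · calc ({y₀, qs} : Set V).ncard ≤ ({qs} : Set V).ncard + 1 := Set.ncard_insert_le _ _
        _ ≤ 3 := by rw [Set.ncard_singleton]; omega
    · intro s hs
      have hsnot : s ∉ ({x₀, ps} ∪ {y₀, qs} : Set V) := by
        intro h
        rcases h with h | h
        · rcases h with rfl | h
          · exact hSD₁ s hs hx₀
          · rw [Set.mem_singleton_iff] at h; subst h; exact hSD₁ s hs hpsD
        · rcases h with rfl | h
          · exact hSD₂ s hs hy₀
          · rw [Set.mem_singleton_iff] at h; subst h; exact hSD₂ s hs hqsD
      by_cases h1 : G.Adj s x₀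
      · exact Or.inr ⟨hsnot, x₀, Or.inl (Or.inl rfl), h1⟩
      by_cases h2 : G.Adj s y₀
      · exact Or.inr ⟨hsnot, y₀, Or.inr (Or.inl rfl), h2⟩
      have hsU : s ∈ U := ⟨hs, h1, h2⟩
      rcases hcov s hsU with h | h
      · exact Or.inr ⟨hsnot, ps, Or.inl (Or.inr rfl), h⟩
      · exact Or.inr ⟨hsnot, qs, Or.inr (Or.inr rfl), h⟩
  · -- U empty: x₀ and y₀ already cover S
    refine ⟨{x₀}, {y₀}, ?_, ?_, ?_, ?_, ?_⟩
    · intro z hz; rw [Set.mem_singleton_iff] at hz; subst hz; exact hx₀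
    · intro z hz; rw [Set.mem_singleton_iff] at hz; subst hz; exact hy₀
    · rw [Set.ncard_singleton]; omega
    · rw [Set.ncard_singleton]; omega
    · intro s hs
      have hsnot : s ∉ ({x₀} ∪ {y₀} : Set V) := by
        intro h
        rcases h with h | h
        · rw [Set.mem_singleton_iff] at h; subst h; exact hSD₁ s hs hx₀
        · rw [Set.mem_singleton_iff] at h; subst h; exact hSD₂ s hs hy₀
      have : ¬(s ∈ U) := fun h => hU ⟨s, h⟩
      rw [hUdef] at this
      simp only [Set.mem_setOf_eq, not_and, not_not] at this
      by_cases h1 : G.Adj s x₀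
      · exact Or.inr ⟨hsnot, x₀, Or.inl rfl, h1⟩
      · exact Or.inr ⟨hsnot, y₀, Or.inr rfl, this hs h1⟩
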